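/- Let $a, b, r, s > 0$ be real numbers. Then $\int_0^{\infty} e^{-b u}(r + s e^{-u})^{-a-b}\, du \; + \; \int_0^{\infty} e^{-a u}(s + r e^{-u})^{-a-b}\, du \; = \; r^{-a} s^{-b}\, \frac{\Gamma(a)\Gamma(b)}{\Gamma(a+b)}$. -/

import Mathlib

open MeasureTheory Set Real


lemma exp_neg_image : (fun u : ℝ => Real.exp (-u)) '' Set.Ioi 0 = Set.Ioo 0 1 := by
  ext y
  constructor
  · rintro ⟨u, hu, rfl⟩
    exact ⟨Real.exp_pos _, Real.exp_lt_one_iff.mpr (by simpa using hu)⟩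
  · rintro ⟨hy0, hy1⟩
    exact ⟨-Real.log y, by simpa using Real.log_neg hy0 hy1, by simp [Real.exp_log hy0]⟩

lemma substA (c e p q : ℝ) :
    (∫ u in Set.Ioi (0:ℝ), Real.exp (-c*u) * (p + q * Real.exp (-u)) ^ e)
      = ∫ x in Set.Ioo (0:ℝ) 1, x ^ (c-1) * (p + q * x) ^ e := by
  rw [← exp_neg_image,
    integral_image_eq_integral_abs_deriv_smul measurableSet_Ioi
      (f' := fun u => -Real.exp (-u))
      (fun u _ => by
        simpa [Function.comp_def] using ((Real.hasDerivAt_exp (-u)).comp u (hasDerivAt_neg u)).hasDerivWithinAt)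
      (fun x _ y _ h => neg_injective (Real.exp_injective h))]
  refine setIntegral_congr_fun measurableSet_Ioi fun u _ => ?_
  have h1 : Real.exp (-u) ^ (c - 1) = Real.exp (-u * (c - 1)) := (Real.exp_mul _ _).symm
  rw [smul_eq_mul, abs_neg, abs_of_pos (Real.exp_pos _), h1, ← mul_assoc, ← Real.exp_add]
  ring_nf


lemma inv_image : (fun x : ℝ => x⁻¹) '' Set.Ioi 1 = Set.Ioo 0 1 := by
  ext y
  constructor
  · rintro ⟨x, hx, rfl⟩
    have hx0 : (0:ℝ) < x := lt_trans one_pos hx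
    exact ⟨inv_pos.mpr hx0, inv_lt_one_of_one_lt₀ hx⟩
  · rintro ⟨hy0, hy1⟩
    exact ⟨y⁻¹, one_lt_inv_iff₀.mpr ⟨hy0, hy1⟩, inv_inv y⟩

lemma substB (a b r s : ℝ) (hr : 0 < r) (hs : 0 < s) :
    (∫ x in Set.Ioo (0:ℝ) 1, x ^ (a-1) * (s + r * x) ^ (-a-b))
      = ∫ x in Set.Ioi (1:ℝ), x ^ (b-1) * (r + s * x) ^ (-a-b) := by
  rw [← inv_image,
    integral_image_eq_integral_abs_deriv_smul measurableSet_Ioi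
      (f' := fun x => -(x^2)⁻¹)
      (fun x hx => (hasDerivAt_inv (ne_of_gt (lt_trans one_pos hx))).hasDerivWithinAt)
      (fun x _ y _ h => inv_injective h)]
  refine setIntegral_congr_fun measurableSet_Ioi fun x hx => ?_
  have hx : (1:ℝ) < x := hx
  have hx0 : (0:ℝ) < x := lt_trans one_pos hx
  have h1 : s + r * x⁻¹ = (r + s * x) / x := by field_simp; ring
  have h2 : (0:ℝ) ≤ r + s * x := by positivity
  rw [smul_eq_mul, abs_neg, abs_inv, abs_of_pos (by positivity : (0:ℝ) < x^2), h1,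
    Real.div_rpow h2 hx0.le]
  have key : (x^2)⁻¹ * (x⁻¹) ^ (a-1) / x ^ (-a-b) = x ^ (b-1) := by
    rw [Real.inv_rpow hx0.le, ← Real.rpow_neg hx0.le, ← Real.rpow_natCast x 2,
      ← Real.rpow_neg hx0.le, ← Real.rpow_add hx0, ← Real.rpow_sub hx0]
    congr 1
    push_cast
    ring
  rw [← key]
  ring


lemma frac_image (r s : ℝ) (hr : 0 < r) (hs : 0 < s) :
    (fun t : ℝ => r * t / (s * (1 - t))) '' Set.Ioo 0 1 = Set.Ioi 0 := by
  ext y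
  simp only [Set.mem_image, Set.mem_Ioi, Set.mem_Ioo]
  constructor
  · rintro ⟨t, ⟨ht0, ht1⟩, rfl⟩
    have : (0:ℝ) < 1 - t := by linarith
    positivity
  · intro hy
    refine ⟨s * y / (r + s * y), ⟨by positivity, ?_⟩, ?_⟩
    · rw [div_lt_one (by positivity)]; linarith
    · have h : (0:ℝ) < r + s * y := by positivity
      field_simp
      simp [hr.ne']

lemma substD (a b r s : ℝ) (hr : 0 < r) (hs : 0 < s) :
    (∫ x in Set.Ioi (0:ℝ), x ^ (b-1) * (r + s * x) ^ (-a-b))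
      = ∫ t in Set.Ioo (0:ℝ) 1, r ^ (-a) * s ^ (-b) * (t ^ (b-1) * (1-t) ^ (a-1)) := by
  rw [← frac_image r s hr hs,
    integral_image_eq_integral_abs_deriv_smul measurableSet_Ioo
      (f' := fun t => r / (s * (1 - t)^2))
      (fun t ht => ?_) (fun t₁ ht₁ t₂ ht₂ h => ?_)]
  · refine setIntegral_congr_fun measurableSet_Ioo fun t ht => ?_
    obtain ⟨ht0, ht1⟩ := ht
    have hd : (0:ℝ) < 1 - t := by linarith
    have h1 : r + s * (r * t / (s * (1 - t))) = r / (1 - t) := by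
      field_simp; ring
    rw [smul_eq_mul, abs_of_pos (by positivity), h1,
      Real.div_rpow hr.le hd.le,
      Real.div_rpow (by positivity : (0:ℝ) ≤ r * t) (by positivity : (0:ℝ) ≤ s * (1-t)),
      Real.mul_rpow hr.le ht0.le, Real.mul_rpow hs.le hd.le]
    have er : r * r ^ (b-1) * r ^ (-a-b) = r ^ (-a) := by
      nth_rewrite 1 [← Real.rpow_one r]
      rw [← Real.rpow_add hr, ← Real.rpow_add hr]; congr 1; ring
    have es : s⁻¹ * (s ^ (b-1))⁻¹ = s ^ (-b) := by
      rw [← Real.rpow_neg_one s, ← Real.rpow_neg hs.le, ← Real.rpow_add hs]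
      congr 1; ring
    have ed : ((1-t)^2)⁻¹ * ((1-t) ^ (b-1))⁻¹ * ((1-t) ^ (-a-b))⁻¹ = (1-t) ^ (a-1) := by
      rw [← Real.rpow_natCast (1-t) 2, ← Real.rpow_neg hd.le, ← Real.rpow_neg hd.le,
        ← Real.rpow_neg hd.le, ← Real.rpow_add hd, ← Real.rpow_add hd]
      congr 1; push_cast; ring
    rw [← er, ← es, ← ed]
    have p1 : r ^ (b-1) ≠ 0 := (Real.rpow_pos_of_pos hr _).ne'
    have p2 : r ^ (-a-b) ≠ 0 := (Real.rpow_pos_of_pos hr _).ne'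
    have p3 : s ^ (b-1) ≠ 0 := (Real.rpow_pos_of_pos hs _).ne'
    have p4 : (1-t) ^ (b-1) ≠ 0 := (Real.rpow_pos_of_pos hd _).ne'
    have p5 : (1-t) ^ (-a-b) ≠ 0 := (Real.rpow_pos_of_pos hd _).ne'
    have p6 : (1-t) ≠ 0 := hd.ne'
    field_simp
  · have hd : (0:ℝ) < 1 - t := by rcases ht with ⟨h0, h1⟩; linarith
    have H : HasDerivAt (fun t : ℝ => r * t / (s * (1 - t))) (r / (s * (1 - t)^2)) t := by
      have h1 : HasDerivAt (fun t : ℝ => r * t) r t := by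
        simpa using (hasDerivAt_id t).const_mul r
      have h2 : HasDerivAt (fun t : ℝ => s * (1 - t)) (-s) t := by
        have := ((hasDerivAt_id t).const_sub 1).const_mul s
        simpa using this
      have := h1.div h2 (by positivity)
      refine this.congr_deriv ?_
      rw [div_eq_div_iff (by positivity) (by positivity)]
      ring
    exact H.hasDerivWithinAt
  · obtain ⟨h10, h11⟩ := ht₁
    obtain ⟨h20, h21⟩ := ht₂
    have hd1 : (0:ℝ) < 1 - t₁ := by linarith
    have hd2 : (0:ℝ) < 1 - t₂ := by linarith
    field_simp at h
    have key : r * s * t₁ = r * s * t₂ := by rw [show t₁ = t₂ by linarith [h]]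
    exact mul_left_cancel₀ (by positivity : r * s ≠ 0) key


lemma g_cont (a b r s : ℝ) (hr : 0 < r) (hs : 0 < s) :
    ContinuousOn (fun x : ℝ => x ^ (b-1) * (r + s * x) ^ (-a-b)) (Set.Ioi 0) := by
  apply ContinuousOn.mul
  · exact ContinuousOn.rpow_const continuousOn_id (fun x hx => Or.inl (ne_of_gt hx))
  · exact ContinuousOn.rpow_const (by fun_prop)
      (fun x hx => Or.inl (by have : (0:ℝ) < x := hx; positivity))

lemma g_int_Ioo (a b r s : ℝ) (ha : 0 < a) (hb : 0 < b) (hr : 0 < r) (hs : 0 < s) :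
    IntegrableOn (fun x : ℝ => x ^ (b-1) * (r + s * x) ^ (-a-b)) (Set.Ioo 0 1) := by
  have hmaj : IntegrableOn (fun x : ℝ => r ^ (-a-b) * x ^ (b-1)) (Set.Ioo 0 1) :=
    ((intervalIntegral.integrableOn_Ioo_rpow_iff one_pos).mpr (by linarith)).const_mul _
  refine hmaj.integrable.mono' ?_ ?_
  · exact ((g_cont a b r s hr hs).mono Set.Ioo_subset_Ioi_self).aestronglyMeasurable
      measurableSet_Ioo
  · filter_upwards [ae_restrict_mem measurableSet_Ioo] with x hx
    obtain ⟨hx0, hx1⟩ := hx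
    have h1 : (0:ℝ) < r + s * x := by positivity
    rw [Real.norm_eq_abs, abs_of_nonneg (by positivity)]
    have h2 : (r + s * x) ^ (-a-b) ≤ r ^ (-a-b) :=
      Real.rpow_le_rpow_of_nonpos hr (by nlinarith) (by linarith)
    calc x ^ (b-1) * (r + s*x) ^ (-a-b) ≤ x ^ (b-1) * r ^ (-a-b) := by
          exact mul_le_mul_of_nonneg_left h2 (by positivity)
      _ = r ^ (-a-b) * x ^ (b-1) := by ring

lemma g_int_Ioi (a b r s : ℝ) (ha : 0 < a) (hb : 0 < b) (hr : 0 < r) (hs : 0 < s) :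
    IntegrableOn (fun x : ℝ => x ^ (b-1) * (r + s * x) ^ (-a-b)) (Set.Ioi 1) := by
  have hmaj : IntegrableOn (fun x : ℝ => s ^ (-a-b) * x ^ (-a-1)) (Set.Ioi 1) :=
    (integrableOn_Ioi_rpow_of_lt (by linarith) one_pos).const_mul _
  refine hmaj.integrable.mono' ?_ ?_
  · exact ((g_cont a b r s hr hs).mono (fun x (hx : x ∈ Set.Ioi (1:ℝ)) => show (0:ℝ) < x from lt_trans one_pos hx)).aestronglyMeasurable
      measurableSet_Ioi
  · filter_upwards [ae_restrict_mem measurableSet_Ioi] with x hx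
    have hx1 : (1:ℝ) < x := hx
    have hx0 : (0:ℝ) < x := lt_trans one_pos hx1
    rw [Real.norm_eq_abs, abs_of_nonneg (by positivity)]
    have h2 : (r + s * x) ^ (-a-b) ≤ (s * x) ^ (-a-b) :=
      Real.rpow_le_rpow_of_nonpos (by positivity) (by linarith) (by linarith)
    calc x ^ (b-1) * (r + s*x) ^ (-a-b) ≤ x ^ (b-1) * (s * x) ^ (-a-b) :=
          mul_le_mul_of_nonneg_left h2 (by positivity)
      _ = s ^ (-a-b) * x ^ (-a-1) := by
          rw [Real.mul_rpow hs.le hx0.le,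
            show x ^ (b-1) * (s ^ (-a-b) * x ^ (-a-b)) = s ^ (-a-b) * (x ^ (b-1) * x ^ (-a-b)) from by ring,
            ← Real.rpow_add hx0]
          congr 1
          ring


lemma real_beta (a b : ℝ) (ha : 0 < a) (hb : 0 < b) :
    (∫ t in Set.Ioo (0:ℝ) 1, t ^ (b-1) * (1-t) ^ (a-1))
      = Real.Gamma a * Real.Gamma b / Real.Gamma (a+b) := by
  have hcast : Complex.betaIntegral b a
      = ((∫ t in (0:ℝ)..1, t ^ (b-1) * (1-t) ^ (a-1) : ℝ) : ℂ) := by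
    rw [Complex.betaIntegral, ← intervalIntegral.integral_ofReal]
    refine intervalIntegral.integral_congr fun x hx => ?_
    rw [Set.uIcc_of_le zero_le_one] at hx
    rw [show ((b:ℂ) - 1) = ((b-1:ℝ):ℂ) from by push_cast; ring,
      show ((a:ℂ) - 1) = ((a-1:ℝ):ℂ) from by push_cast; ring,
      show (1 - (x:ℂ)) = ((1 - x : ℝ):ℂ) from by push_cast; ring,
      Complex.ofReal_mul, ← Complex.ofReal_cpow hx.1,
      ← Complex.ofReal_cpow (by linarith [hx.2])]
  have hmain := Complex.Gamma_mul_Gamma_eq_betaIntegral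
    (s := (b:ℂ)) (t := (a:ℂ)) (by simpa using hb) (by simpa using ha)
  rw [hcast] at hmain
  have hab : ((b:ℂ) + (a:ℂ)) = ((a + b : ℝ) : ℂ) := by push_cast; ring
  rw [hab, Complex.Gamma_ofReal, Complex.Gamma_ofReal, Complex.Gamma_ofReal,
    ← Complex.ofReal_mul, ← Complex.ofReal_mul] at hmain
  have hreal := Complex.ofReal_injective hmain
  have hΓ : Real.Gamma (a+b) ≠ 0 := (Real.Gamma_pos_of_pos (by linarith)).ne'
  rw [← integral_Ioc_eq_integral_Ioo, ← intervalIntegral.integral_of_le zero_le_one,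
    eq_div_iff hΓ]
  linarith [hreal]

/-- Splitting the beta integral over the two charts of the tropical projective line. -/
theorem beta_integral_two_charts (a b r s : ℝ) (ha : 0 < a) (hb : 0 < b)
    (hr : 0 < r) (hs : 0 < s) :
    (∫ u in Set.Ioi (0 : ℝ), Real.exp (-b * u) * (r + s * Real.exp (-u)) ^ (-a - b))
      + (∫ u in Set.Ioi (0 : ℝ), Real.exp (-a * u) * (s + r * Real.exp (-u)) ^ (-a - b))
      = r ^ (-a) * s ^ (-b) * (Real.Gamma a * Real.Gamma b / Real.Gamma (a + b)) := by
  have hdisj : Disjoint (Set.Ioo (0:ℝ) 1) (Set.Ici 1) :=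
    Set.disjoint_left.mpr fun x hx hx' => absurd hx.2 (not_lt.mpr hx')
  rw [substA b (-a-b) r s, substA a (-a-b) s r, substB a b r s hr hs,
    ← integral_Ici_eq_integral_Ioi,
    ← setIntegral_union hdisj
      measurableSet_Ici (g_int_Ioo a b r s ha hb hr hs)
      ((integrableOn_Ici_iff_integrableOn_Ioi).mpr (g_int_Ioi a b r s ha hb hr hs)),
    Set.Ioo_union_Ici_eq_Ioi one_pos, substD a b r s hr hs, MeasureTheory.integral_const_mul,
    real_beta a b ha hb]
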